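/- Positive introspection fails in EGL: there exists a finite EGL-model (S, r, π) with S the 9 states {0, 0.5, 1}², accessibility r_b((x,y),(x',y')) = 1 if x = x', 0.81 if |x−x'| = 0.5, 0.72 if |x−x'| = 1, and valuation V(s)(m_a) = first coordinate of s, such that at state (1,1), B_b(m_a) = 0.28 while B_b(B_b(m_a)) = 0.19; hence the Gödel value of B_b m_a → B_b B_b m_a at (1,1) is 0.19 < 1. -/

import Mathlib

/-- Gödel implication on [0,1]. -/
noncomputable def GI (x y : ℝ) : ℝ := if x ≤ y then 1 else y

/-- Fuzzy belief operator on a finite nonempty state set. -/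
noncomputable def Bel {S : Type*} [Fintype S] [Nonempty S]
    (r : S → S → ℝ) (f : S → ℝ) (s : S) : ℝ :=
  Finset.univ.inf' Finset.univ_nonempty fun s' => max (1 - r s s') (f s')

/-- The three mud-values 0, 0.5, 1. -/
noncomputable def mud : Fin 3 → ℝ := ![0, 0.5, 1]

/-- Agent b's indistinguishing function on states (x,y) ∈ {0,0.5,1}²,
depending on the difference of the first coordinates. -/
noncomputable def rb (s t : Fin 3 × Fin 3) : ℝ :=
  if mud s.1 = mud t.1 then 1
  else if |mud s.1 - mud t.1| = 0.5 then 0.81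
  else 0.72

/-- The atomic proposition m_a: value of the first coordinate. -/
noncomputable def ma (s : Fin 3 × Fin 3) : ℝ := mud s.1


lemma bel_ma (s : Fin 3 × Fin 3) : Bel rb ma s = ![0, 0.19, 0.28] s.1 := by
  obtain ⟨a, b⟩ := s
  apply le_antisymm
  · calc Bel rb ma (a, b) ≤ max (1 - rb (a,b) (0,0)) (ma (0,0)) :=
          Finset.inf'_le _ (Finset.mem_univ _)
      _ = _ := by fin_cases a <;> norm_num [rb, ma, mud, abs]
  · apply Finset.le_inf'
    rintro ⟨c, d⟩ _
    fin_cases a <;> fin_cases c <;> norm_num [rb, ma, mud, abs]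

lemma bel_bel : Bel rb (Bel rb ma) (2, 2) = 0.19 := by
  apply le_antisymm
  · calc Bel rb (Bel rb ma) (2, 2) ≤ max (1 - rb (2,2) (1,0)) (Bel rb ma (1,0)) :=
          Finset.inf'_le _ (Finset.mem_univ _)
      _ = _ := by norm_num [rb, mud, abs, bel_ma, Matrix.cons_val_two]
  · apply Finset.le_inf'
    rintro ⟨c, d⟩ _
    fin_cases c <;> norm_num [rb, mud, abs, bel_ma, Matrix.cons_val_two]

theorem positive_introspection_fails :
    Bel rb ma (2, 2) = 0.28 ∧
    Bel rb (Bel rb ma) (2, 2) = 0.19 ∧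
    GI (Bel rb ma (2, 2)) (Bel rb (Bel rb ma) (2, 2)) = 0.19 ∧
    GI (Bel rb ma (2, 2)) (Bel rb (Bel rb ma) (2, 2)) < 1 := by
  have h1 : Bel rb ma (2, 2) = 0.28 := by rw [bel_ma]; norm_num [Matrix.cons_val_two]
  refine ⟨h1, bel_bel, ?_, ?_⟩ <;> rw [GI, h1, bel_bel] <;> norm_num
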